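/- Under the ROBE-Z setup, the estimator admits the pairwise expansion Ŝ(x,y) = Σ_{i=0}^{n−1} Σ_{i'=0}^{n−1} x_i y_{i'} g(i) g(i') 𝟙[idx(i) = idx(i')], and its second moment equals E[ Ŝ(x,y)² ] = ⟨x,y⟩² + (1/m)·( Σ_{(i,j): Z_id(i) ≠ Z_id(j)} x_i² y_j² + Σ_{(i,j): Z_id(i) ≠ Z_id(j)} x_i y_i x_j y_j ). -/

import Mathlib

open Finset

noncomputable section

/-- Sign value of a Boolean: `true ↦ +1`, `false ↦ -1`. -/
def sgn (b : Bool) : ℝ := if b then 1 else -1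

/-- The block id of an index `i` is a valid index into `Fin (n / Z)`. -/
theorem blockLt {n Z : ℕ} (hdvd : Z ∣ n) (i : Fin n) : i.1 / Z < n / Z :=
  Nat.div_lt_div_of_lt_of_dvd hdvd i.isLt

/-- ROBE-Z location map: `idx i = (h (⌊i/Z⌋) + (i mod Z)) mod m`. -/
def idx (n m Z : ℕ) (hdvd : Z ∣ n) (h : Fin (n / Z) → Fin m) (i : Fin n) : ℕ :=
  ((h ⟨i.1 / Z, blockLt hdvd i⟩).1 + i.1 % Z) % m

/-- The ROBE-Z inner-product estimator `Ŝ(x,y)`, as a function of the random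
sample `ω = (h, g)` drawn from the (finite) product space. -/
def est (n m Z : ℕ) (hdvd : Z ∣ n) (x y : Fin n → ℝ)
    (ω : (Fin (n / Z) → Fin m) × (Fin n → Bool)) : ℝ :=
  ∑ j : Fin m,
    (∑ i : Fin n, x i * sgn (ω.2 i) * (if idx n m Z hdvd ω.1 i = j.1 then 1 else 0)) *
    (∑ i : Fin n, y i * sgn (ω.2 i) * (if idx n m Z hdvd ω.1 i = j.1 then 1 else 0))

/-- Expectation with respect to the uniform (product) measure on the finite
sample space of pairs `(h, g)`. -/
def expec (n m Z : ℕ) (f : ((Fin (n / Z) → Fin m) × (Fin n → Bool)) → ℝ) : ℝ :=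
  (∑ ω : (Fin (n / Z) → Fin m) × (Fin n → Bool), f ω) /
    (Fintype.card ((Fin (n / Z) → Fin m) × (Fin n → Bool)))

lemma sgn_sq (b : Bool) : sgn b * sgn b = 1 := by cases b <;> norm_num [sgn]

lemma sum_bool_pow (c : ℕ) : ∑ b : Bool, sgn b ^ c = if Even c then 2 else 0 := by
  rcases Nat.even_or_odd c with hc | hc
  · simp [Fintype.sum_bool, sgn, hc, hc.neg_one_pow]
  · simp [Fintype.sum_bool, sgn, hc.neg_one_pow, Nat.not_even_iff_odd.2 hc]

lemma prod_delta {n : ℕ} (g : Fin n → Bool) (i : Fin n) :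
    ∏ t : Fin n, sgn (g t) ^ (if t = i then 1 else 0) = sgn (g i) := by
  have : ∀ t : Fin n, sgn (g t) ^ (if t = i then 1 else 0) =
      (if t = i then sgn (g t) else 1) := by
    intro t; split <;> simp
  rw [Finset.prod_congr rfl (fun t _ => this t), Finset.prod_ite_eq' Finset.univ i (fun t => sgn (g t))]
  simp

lemma sum_g_master {n : ℕ} (c : Fin n → ℕ) :
    ∑ g : Fin n → Bool, ∏ t : Fin n, sgn (g t) ^ c t =
      if (∀ t, Even (c t)) then (2 : ℝ) ^ n else 0 := by
  rw [← Fintype.prod_sum (fun t b => sgn b ^ c t)]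
  by_cases hall : ∀ t, Even (c t)
  · simp only [hall, if_true]
    have : ∀ t : Fin n, ∑ b : Bool, sgn b ^ c t = 2 := by
      intro t; rw [sum_bool_pow]; simp [hall t]
    rw [Finset.prod_congr rfl (fun t _ => this t)]
    simp
  · simp only [hall, if_false]
    push_neg at hall
    obtain ⟨t, ht⟩ := hall
    apply Finset.prod_eq_zero (Finset.mem_univ t)
    rw [sum_bool_pow]; simp [ht]

lemma sum_g_pair {n : ℕ} {i k : Fin n} (hik : i ≠ k) :
    ∑ g : Fin n → Bool, sgn (g i) * sgn (g k) = 0 := by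
  have key : ∀ g : Fin n → Bool, sgn (g i) * sgn (g k) =
      ∏ t : Fin n, sgn (g t) ^ ((if t = i then 1 else 0) + (if t = k then 1 else 0)) := by
    intro g
    simp only [pow_add, Finset.prod_mul_distrib, prod_delta]
  rw [Finset.sum_congr rfl (fun g _ => key g), sum_g_master]
  have : ¬ ∀ t : Fin n, Even ((if t = i then 1 else 0) + (if t = k then 1 else 0)) := by
    intro h
    have := h i
    simp [hik, Nat.even_iff] at this
  simp [this]

lemma sum_g_four {n : ℕ} {i i' k k' : Fin n} (h1 : i ≠ i') (h2 : k ≠ k') :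
    ∑ g : Fin n → Bool, sgn (g i) * sgn (g i') * sgn (g k) * sgn (g k') =
      if (i = k ∧ i' = k') ∨ (i = k' ∧ i' = k) then (2 : ℝ) ^ n else 0 := by
  have key : ∀ g : Fin n → Bool, sgn (g i) * sgn (g i') * sgn (g k) * sgn (g k') =
      ∏ t : Fin n, sgn (g t) ^ ((if t = i then 1 else 0) + (if t = i' then 1 else 0)
        + (if t = k then 1 else 0) + (if t = k' then 1 else 0)) := by
    intro g
    simp only [pow_add, Finset.prod_mul_distrib, prod_delta]
  rw [Finset.sum_congr rfl (fun g _ => key g), sum_g_master]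
  congr 1
  simp only [eq_iff_iff]
  constructor
  · intro h
    have hi := h i; have hi' := h i'; have hk := h k; have hk' := h k'
    simp only [Nat.even_iff] at hi hi' hk hk'
    by_cases e1 : i = k <;> by_cases e2 : i = k' <;> by_cases e3 : i' = k <;>
      by_cases e4 : i' = k' <;>
      first
        | tauto
        | (exfalso; simp_all [Nat.even_iff])
        | (exfalso; simp_all [Nat.even_iff]; omega)
  · rintro (⟨rfl, rfl⟩ | ⟨rfl, rfl⟩) t <;>
      · by_cases e1 : t = i <;> by_cases e2 : t = i' <;>
          simp_all [Nat.even_iff]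

lemma idx_lt {n m Z : ℕ} (hm : 0 < m) (hdvd : Z ∣ n) (h : Fin (n / Z) → Fin m)
    (i : Fin n) : idx n m Z hdvd h i < m := Nat.mod_lt _ hm

lemma idx_same_block {n m Z : ℕ} (hZ : 0 < Z) (hZm : Z ≤ m) (hdvd : Z ∣ n)
    (h : Fin (n / Z) → Fin m) {i k : Fin n} (hb : i.1 / Z = k.1 / Z) :
    (idx n m Z hdvd h i = idx n m Z hdvd h k ↔ i = k) := by
  constructor
  · intro he
    unfold idx at he
    have hbb : (⟨i.1 / Z, blockLt hdvd i⟩ : Fin (n / Z)) = ⟨k.1 / Z, blockLt hdvd k⟩ :=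
      Fin.ext hb
    rw [hbb] at he
    have hmod : i.1 % Z = k.1 % Z := by
      have h1 : (i.1 % Z) % m = (k.1 % Z) % m :=
        Nat.ModEq.add_left_cancel' _ he
      rwa [Nat.mod_eq_of_lt (lt_of_lt_of_le (Nat.mod_lt _ hZ) hZm),
        Nat.mod_eq_of_lt (lt_of_lt_of_le (Nat.mod_lt _ hZ) hZm)] at h1
    apply Fin.ext
    have d1 := Nat.div_add_mod i.1 Z
    have d2 := Nat.div_add_mod k.1 Z
    calc i.1 = Z * (i.1 / Z) + i.1 % Z := d1.symm
      _ = Z * (k.1 / Z) + k.1 % Z := by rw [hb, hmod]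
      _ = k.1 := d2
  · rintro rfl; rfl

lemma sum_h_collision {n m Z : ℕ} (hm : 0 < m) (hdvd : Z ∣ n)
    {i k : Fin n} (hb : i.1 / Z ≠ k.1 / Z) :
    ∑ h : Fin (n / Z) → Fin m,
      (if idx n m Z hdvd h i = idx n m Z hdvd h k then (1 : ℝ) else 0) =
      (m : ℝ) ^ (n / Z - 1) := by
  haveI : NeZero m := ⟨hm.ne'⟩
  set b : Fin (n / Z) := ⟨i.1 / Z, blockLt hdvd i⟩ with hbdef
  set b' : Fin (n / Z) := ⟨k.1 / Z, blockLt hdvd k⟩ with hb'def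
  have hbb' : b ≠ b' := by
    intro hc; exact hb (congrArg Fin.val hc)
  -- split the function space at coordinate b
  rw [← Equiv.sum_comp (Equiv.piSplitAt b (fun _ : Fin (n / Z) => Fin m)).symm]
  rw [Fintype.sum_prod_type]
  rw [Finset.sum_comm]
  have hb'mem : b' ≠ b := hbb'.symm
  have step : ∀ rest : (∀ j : { j // j ≠ b }, Fin m),
      ∑ v : Fin m,
        (if idx n m Z hdvd ((Equiv.piSplitAt b fun _ => Fin m).symm (v, rest)) i =
            idx n m Z hdvd ((Equiv.piSplitAt b fun _ => Fin m).symm (v, rest)) k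
          then (1 : ℝ) else 0) = 1 := by
    intro rest
    have hvb : ∀ v : Fin m, (Equiv.piSplitAt b fun _ => Fin m).symm (v, rest) b = v := by
      intro v; simp [Equiv.piSplitAt]
    have hvb' : ∀ v : Fin m,
        (Equiv.piSplitAt b fun _ => Fin m).symm (v, rest) b' = rest ⟨b', hb'mem⟩ := by
      intro v; simp [Equiv.piSplitAt, hb'mem]
    -- target value
    set t : ℕ := ((rest ⟨b', hb'mem⟩).1 + k.1 % Z) % m with htdef
    have htlt : t < m := Nat.mod_lt _ hm
    have hidxk : ∀ v : Fin m,
        idx n m Z hdvd ((Equiv.piSplitAt b fun _ => Fin m).symm (v, rest)) k = t := by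
      intro v; unfold idx; rw [← hb'def, hvb' v]
    have hidxi : ∀ v : Fin m,
        idx n m Z hdvd ((Equiv.piSplitAt b fun _ => Fin m).symm (v, rest)) i
          = (v.1 + i.1 % Z) % m := by
      intro v; unfold idx; rw [← hbdef, hvb v]
    simp only [hidxi, hidxk]
    -- now count v with (v + r) % m = t
    set c : Fin m := ⟨i.1 % Z % m, Nat.mod_lt _ hm⟩ with hcdef
    have hvc : ∀ v : Fin m, (v.1 + i.1 % Z) % m = (v + c).1 := by
      intro v; rw [Fin.add_def]; simp [hcdef, Nat.add_mod]
    simp only [hvc]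
    have hshift : ∑ v : Fin m, (if ((v + c).1 = t) then (1:ℝ) else 0)
        = ∑ u : Fin m, (if (u.1 = t) then (1:ℝ) else 0) :=
      Equiv.sum_comp (Equiv.addRight c) (fun u => if (u.1 = t) then (1:ℝ) else 0)
    rw [hshift]
    have hwt : ∀ w : Fin m, ((w : ℕ) = t) = (w = ⟨t, htlt⟩) := by
      intro w; simp [Fin.ext_iff]
    simp only [hwt]
    rw [Finset.sum_ite_eq' Finset.univ (⟨t, htlt⟩ : Fin m) (fun _ => (1:ℝ))]
    simp
  rw [Finset.sum_congr rfl (fun rest _ => step rest), Finset.sum_const, nsmul_eq_mul, mul_one]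
  have : Fintype.card { j // j ≠ b } = n / Z - 1 := by
    simp [Fintype.card_subtype_compl]
  simp [Fintype.card_fun, this]

lemma est_pairwise {n m Z : ℕ} (hm : 0 < m) (hdvd : Z ∣ n) (x y : Fin n → ℝ)
    (ω : (Fin (n / Z) → Fin m) × (Fin n → Bool)) :
    est n m Z hdvd x y ω =
      ∑ i : Fin n, ∑ i' : Fin n,
        x i * y i' * sgn (ω.2 i) * sgn (ω.2 i') *
          (if idx n m Z hdvd ω.1 i = idx n m Z hdvd ω.1 i' then 1 else 0) := by
  unfold est
  simp only [Finset.sum_mul_sum]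
  rw [Finset.sum_comm]
  refine Finset.sum_congr rfl (fun i _ => ?_)
  rw [Finset.sum_comm]
  refine Finset.sum_congr rfl (fun i' _ => ?_)
  have key : ∑ j : Fin m,
      (if idx n m Z hdvd ω.1 i = j.1 then (1:ℝ) else 0) *
      (if idx n m Z hdvd ω.1 i' = j.1 then (1:ℝ) else 0) =
      (if idx n m Z hdvd ω.1 i = idx n m Z hdvd ω.1 i' then (1:ℝ) else 0) := by
    have h1 : ∀ j : Fin m, (idx n m Z hdvd ω.1 i = j.1) = (j = ⟨idx n m Z hdvd ω.1 i, idx_lt hm hdvd ω.1 i⟩) := by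
      intro j; simp [Fin.ext_iff, eq_comm]
    simp only [h1, ite_mul, one_mul, zero_mul]
    rw [Finset.sum_ite_eq' Finset.univ _
      (fun j : Fin m => (if idx n m Z hdvd ω.1 i' = (j:ℕ) then (1:ℝ) else 0))]
    simp [eq_comm]
  calc ∑ j : Fin m, (x i * sgn (ω.2 i) * (if idx n m Z hdvd ω.1 i = j.1 then (1:ℝ) else 0)) *
        (y i' * sgn (ω.2 i') * (if idx n m Z hdvd ω.1 i' = j.1 then (1:ℝ) else 0))
      = (x i * y i' * sgn (ω.2 i) * sgn (ω.2 i')) * ∑ j : Fin m,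
          (if idx n m Z hdvd ω.1 i = j.1 then (1:ℝ) else 0) *
          (if idx n m Z hdvd ω.1 i' = j.1 then (1:ℝ) else 0) := by
        rw [Finset.mul_sum]; exact Finset.sum_congr rfl (fun j _ => by ring)
    _ = _ := by rw [key]

def cind (n m Z : ℕ) (hdvd : Z ∣ n) (h : Fin (n / Z) → Fin m) (i k : Fin n) : ℝ :=
  if idx n m Z hdvd h i = idx n m Z hdvd h k then 1 else 0

def tterm (n m Z : ℕ) (hdvd : Z ∣ n) (x y : Fin n → ℝ)
    (ω : (Fin (n / Z) → Fin m) × (Fin n → Bool)) (p : Fin n × Fin n) : ℝ :=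
  if p.1.1 / Z ≠ p.2.1 / Z then
    x p.1 * y p.2 * sgn (ω.2 p.1) * sgn (ω.2 p.2) * cind n m Z hdvd ω.1 p.1 p.2
  else 0

lemma sep {H G : Type*} [Fintype H] [Fintype G] (F : H → ℝ) (K : G → ℝ) :
    ∑ ω : H × G, F ω.1 * K ω.2 = (∑ h : H, F h) * (∑ g : G, K g) := by
  rw [Fintype.sum_prod_type, Finset.sum_mul_sum]

lemma pointwise_decomp {n m Z : ℕ} (hZ : 0 < Z) (hZm : Z ≤ m) (hdvd : Z ∣ n)
    (x y : Fin n → ℝ) (ω : (Fin (n / Z) → Fin m) × (Fin n → Bool)) (i i' : Fin n) :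
    x i * y i' * sgn (ω.2 i) * sgn (ω.2 i') *
        (if idx n m Z hdvd ω.1 i = idx n m Z hdvd ω.1 i' then (1:ℝ) else 0) =
      (if i = i' then x i * y i else 0) + tterm n m Z hdvd x y ω (i, i') := by
  unfold tterm cind
  by_cases hb : i.1 / Z = i'.1 / Z
  · simp only [hb, ne_eq, not_true_eq_false, if_false, add_zero]
    simp only [idx_same_block hZ hZm hdvd ω.1 hb]
    by_cases hii : i = i'
    · subst hii
      simp only [if_pos trivial, if_true, mul_one]
      rw [mul_assoc, sgn_sq, mul_one]
    · simp [hii]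
  · have hii : i ≠ i' := fun hc => hb (by rw [hc])
    simp only [hii, if_false, zero_add, ne_eq, hb, not_false_eq_true, if_true]

lemma block_ne_imp_ne {n Z : ℕ} {i k : Fin n} (h : i.1 / Z ≠ k.1 / Z) : i ≠ k :=
  fun hc => h (by rw [hc])

lemma sum_tterm_sq_key {n m Z : ℕ} (hm : 0 < m) (hdvd : Z ∣ n)
    (x y : Fin n → ℝ) (p q : Fin n × Fin n) :
    ∑ ω : (Fin (n / Z) → Fin m) × (Fin n → Bool),
        tterm n m Z hdvd x y ω p * tterm n m Z hdvd x y ω q =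
      if (p.1.1 / Z ≠ p.2.1 / Z) ∧ (q = p ∨ q = p.swap) then
        (x p.1 * y p.2 * x q.1 * y q.2) * ((2:ℝ) ^ n * (m:ℝ) ^ (n / Z - 1))
      else 0 := by
  obtain ⟨i, i'⟩ := p
  obtain ⟨k, k'⟩ := q
  by_cases hp : i.1 / Z ≠ i'.1 / Z
  · by_cases hq : k.1 / Z ≠ k'.1 / Z
    · have hii' : i ≠ i' := block_ne_imp_ne hp
      have hkk' : k ≠ k' := block_ne_imp_ne hq
      have expand : ∀ ω : (Fin (n / Z) → Fin m) × (Fin n → Bool),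
          tterm n m Z hdvd x y ω (i, i') * tterm n m Z hdvd x y ω (k, k') =
          ((x i * y i' * x k * y k') *
            (cind n m Z hdvd ω.1 i i' * cind n m Z hdvd ω.1 k k')) *
          (sgn (ω.2 i) * sgn (ω.2 i') * sgn (ω.2 k) * sgn (ω.2 k')) := by
        intro ω
        simp only [tterm, if_pos hp, if_pos hq]
        ring
      rw [Finset.sum_congr rfl (fun ω _ => expand ω),
        sep (fun (h : Fin (n / Z) → Fin m) => x i * y i' * x k * y k' *
            (cind n m Z hdvd h i i' * cind n m Z hdvd h k k'))
          (fun (g : Fin n → Bool) => sgn (g i) * sgn (g i') * sgn (g k) * sgn (g k')),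
        sum_g_four hii' hkk']
      by_cases hpq : (i = k ∧ i' = k') ∨ (i = k' ∧ i' = k)
      · have hcc : ∀ h : Fin (n / Z) → Fin m,
            cind n m Z hdvd h i i' * cind n m Z hdvd h k k' = cind n m Z hdvd h i i' := by
          intro h
          rcases hpq with ⟨rfl, rfl⟩ | ⟨rfl, rfl⟩
          · unfold cind; split <;> norm_num
          · unfold cind
            by_cases hc : idx n m Z hdvd h i = idx n m Z hdvd h i'
            · rw [if_pos hc, if_pos hc.symm]; norm_num
            · rw [if_neg hc, if_neg (fun h' => hc h'.symm)]; norm_num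
        have hqcond : ((k, k') = (i, i') ∨ (k, k') = Prod.swap (i, i')) := by
          rcases hpq with ⟨rfl, rfl⟩ | ⟨rfl, rfl⟩
          · left; rfl
          · right; rfl
        rw [if_pos hpq, if_pos ⟨hp, hqcond⟩]
        have : ∑ h : Fin (n / Z) → Fin m,
            (x i * y i' * x k * y k') *
              (cind n m Z hdvd h i i' * cind n m Z hdvd h k k') =
            (x i * y i' * x k * y k') * (m:ℝ) ^ (n / Z - 1) := by
          rw [Finset.sum_congr rfl (fun h _ => by rw [hcc h]), ← Finset.mul_sum]
          unfold cind
          rw [sum_h_collision hm hdvd hp]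
        rw [this]
        ring
      · rw [if_neg hpq, mul_zero, if_neg]
        rintro ⟨-, hpe | hpe⟩
        · rw [Prod.mk.injEq] at hpe
          exact hpq (Or.inl ⟨hpe.1.symm, hpe.2.symm⟩)
        · rw [Prod.swap_prod_mk, Prod.mk.injEq] at hpe
          exact hpq (Or.inr ⟨hpe.2.symm, hpe.1.symm⟩)
    · have hq0 : ∀ ω : (Fin (n / Z) → Fin m) × (Fin n → Bool),
          tterm n m Z hdvd x y ω (k, k') = 0 := by
        intro ω; simp only [tterm]; rw [if_neg hq]
      rw [Finset.sum_congr rfl (fun ω _ => by rw [hq0 ω, mul_zero]), Finset.sum_const_zero]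
      rw [if_neg]
      rintro ⟨hp', hpe | hpe⟩
      · rw [Prod.mk.injEq] at hpe
        obtain ⟨rfl, rfl⟩ := hpe
        exact hq hp'
      · rw [Prod.swap_prod_mk, Prod.mk.injEq] at hpe
        obtain ⟨rfl, rfl⟩ := hpe
        exact hq (Ne.symm hp')
  · have hp0 : ∀ ω : (Fin (n / Z) → Fin m) × (Fin n → Bool),
        tterm n m Z hdvd x y ω (i, i') = 0 := by
      intro ω; simp only [tterm]; rw [if_neg hp]
    rw [Finset.sum_congr rfl (fun ω _ => by rw [hp0 ω, zero_mul]), Finset.sum_const_zero]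
    rw [if_neg]
    rintro ⟨hp', -⟩
    exact hp hp'

lemma est_decomp {n m Z : ℕ} (hm : 0 < m) (hZ : 0 < Z) (hZm : Z ≤ m) (hdvd : Z ∣ n)
    (x y : Fin n → ℝ) (ω : (Fin (n / Z) → Fin m) × (Fin n → Bool)) :
    est n m Z hdvd x y ω =
      (∑ i : Fin n, x i * y i) + ∑ p : Fin n × Fin n, tterm n m Z hdvd x y ω p := by
  rw [est_pairwise hm hdvd x y ω]
  have := fun (i i' : Fin n) => pointwise_decomp hZ hZm hdvd x y ω i i'
  calc ∑ i : Fin n, ∑ i' : Fin n,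
        x i * y i' * sgn (ω.2 i) * sgn (ω.2 i') *
          (if idx n m Z hdvd ω.1 i = idx n m Z hdvd ω.1 i' then (1:ℝ) else 0)
      = ∑ i : Fin n, ∑ i' : Fin n,
          ((if i = i' then x i * y i else 0) + tterm n m Z hdvd x y ω (i, i')) :=
        Finset.sum_congr rfl fun i _ => Finset.sum_congr rfl fun i' _ => this i i'
    _ = (∑ i : Fin n, ∑ i' : Fin n, (if i = i' then x i * y i else 0)) +
          ∑ i : Fin n, ∑ i' : Fin n, tterm n m Z hdvd x y ω (i, i') := by
        rw [← Finset.sum_add_distrib]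
        exact Finset.sum_congr rfl fun i _ => Finset.sum_add_distrib
    _ = (∑ i : Fin n, x i * y i) + ∑ p : Fin n × Fin n, tterm n m Z hdvd x y ω p := by
        congr 1
        · refine Finset.sum_congr rfl fun i _ => ?_
          rw [Finset.sum_ite_eq Finset.univ i (fun _ => x i * y i)]
          simp
        · rw [Fintype.sum_prod_type]

lemma sum_T_zero {n m Z : ℕ} (hdvd : Z ∣ n) (x y : Fin n → ℝ) :
    ∑ ω : (Fin (n / Z) → Fin m) × (Fin n → Bool),
      ∑ p : Fin n × Fin n, tterm n m Z hdvd x y ω p = 0 := by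
  rw [Finset.sum_comm]
  refine Finset.sum_eq_zero fun p _ => ?_
  obtain ⟨i, i'⟩ := p
  by_cases hp : i.1 / Z ≠ i'.1 / Z
  · have expand : ∀ ω : (Fin (n / Z) → Fin m) × (Fin n → Bool),
        tterm n m Z hdvd x y ω (i, i') =
          ((x i * y i') * cind n m Z hdvd ω.1 i i') * (sgn (ω.2 i) * sgn (ω.2 i')) := by
      intro ω; simp only [tterm, if_pos hp]; ring
    rw [Finset.sum_congr rfl fun ω _ => expand ω,
      sep (fun (h : Fin (n / Z) → Fin m) => (x i * y i') * cind n m Z hdvd h i i')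
        (fun (g : Fin n → Bool) => sgn (g i) * sgn (g i')),
      sum_g_pair (block_ne_imp_ne hp), mul_zero]
  · refine Finset.sum_eq_zero fun ω _ => ?_
    simp only [tterm]; rw [if_neg hp]

lemma sum_T_sq {n m Z : ℕ} (hm : 0 < m) (hdvd : Z ∣ n) (x y : Fin n → ℝ) :
    ∑ ω : (Fin (n / Z) → Fin m) × (Fin n → Bool),
        (∑ p : Fin n × Fin n, tterm n m Z hdvd x y ω p) ^ 2 =
      ((∑ i : Fin n, ∑ j : Fin n,
          if i.1 / Z ≠ j.1 / Z then x i ^ 2 * y j ^ 2 else 0) +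
       (∑ i : Fin n, ∑ j : Fin n,
          if i.1 / Z ≠ j.1 / Z then x i * y i * x j * y j else 0)) *
        ((2:ℝ) ^ n * (m:ℝ) ^ (n / Z - 1)) := by
  have expand : ∀ ω : (Fin (n / Z) → Fin m) × (Fin n → Bool),
      (∑ p : Fin n × Fin n, tterm n m Z hdvd x y ω p) ^ 2 =
        ∑ p : Fin n × Fin n, ∑ q : Fin n × Fin n,
          tterm n m Z hdvd x y ω p * tterm n m Z hdvd x y ω q := by
    intro ω; rw [sq, Finset.sum_mul_sum]
  rw [Finset.sum_congr rfl fun ω _ => expand ω, Finset.sum_comm]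
  have swap_inner : ∀ p : Fin n × Fin n,
      (∑ ω : (Fin (n / Z) → Fin m) × (Fin n → Bool), ∑ q : Fin n × Fin n,
          tterm n m Z hdvd x y ω p * tterm n m Z hdvd x y ω q) =
      ∑ q : Fin n × Fin n, ∑ ω : (Fin (n / Z) → Fin m) × (Fin n → Bool),
          tterm n m Z hdvd x y ω p * tterm n m Z hdvd x y ω q := fun p => Finset.sum_comm
  rw [Finset.sum_congr rfl fun p _ => swap_inner p]
  rw [Finset.sum_congr rfl fun p _ => Finset.sum_congr rfl fun q _ =>
    sum_tterm_sq_key hm hdvd x y p q]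
  set K : ℝ := (2:ℝ) ^ n * (m:ℝ) ^ (n / Z - 1) with hK
  have inner_eval : ∀ p : Fin n × Fin n,
      (∑ q : Fin n × Fin n,
        if (p.1.1 / Z ≠ p.2.1 / Z) ∧ (q = p ∨ q = p.swap) then
          (x p.1 * y p.2 * x q.1 * y q.2) * K else 0) =
      (if p.1.1 / Z ≠ p.2.1 / Z then
        (x p.1 ^ 2 * y p.2 ^ 2 + x p.1 * y p.1 * x p.2 * y p.2) * K else 0) := by
    intro p
    by_cases hp : p.1.1 / Z ≠ p.2.1 / Z
    · have hps : p ≠ p.swap := by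
        intro hc
        exact hp (by rw [show p.1 = p.2 from congrArg Prod.fst hc])
      have split_ite : ∀ q : Fin n × Fin n,
          (if (p.1.1 / Z ≠ p.2.1 / Z) ∧ (q = p ∨ q = p.swap) then
            (x p.1 * y p.2 * x q.1 * y q.2) * K else 0) =
          (if q = p then (x p.1 * y p.2 * x q.1 * y q.2) * K else 0) +
          (if q = p.swap then (x p.1 * y p.2 * x q.1 * y q.2) * K else 0) := by
        intro q
        by_cases h1 : q = p
        · subst h1
          rw [if_pos ⟨hp, Or.inl rfl⟩, if_pos rfl, if_neg hps, add_zero]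
        · by_cases h2 : q = p.swap
          · subst h2
            rw [if_pos ⟨hp, Or.inr rfl⟩, if_neg h1, if_pos rfl, zero_add]
          · rw [if_neg (by tauto), if_neg h1, if_neg h2, add_zero]
      rw [Finset.sum_congr rfl fun q _ => split_ite q, Finset.sum_add_distrib,
        Finset.sum_ite_eq' Finset.univ p (fun q => (x p.1 * y p.2 * x q.1 * y q.2) * K),
        Finset.sum_ite_eq' Finset.univ p.swap (fun q => (x p.1 * y p.2 * x q.1 * y q.2) * K),
        if_pos hp]
      simp only [Finset.mem_univ, if_true, Prod.fst_swap, Prod.snd_swap]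
      ring
    · rw [if_neg hp]
      exact Finset.sum_eq_zero fun q _ => if_neg (by tauto)
  rw [Finset.sum_congr rfl fun p _ => inner_eval p]
  rw [Fintype.sum_prod_type]
  rw [add_mul]
  simp only [Finset.sum_mul]
  rw [← Finset.sum_add_distrib]
  refine Finset.sum_congr rfl fun i _ => ?_
  rw [← Finset.sum_add_distrib]
  refine Finset.sum_congr rfl fun j _ => ?_
  split_ifs with hc
  · ring
  · simp

/-- The estimator admits the pairwise expansion
`Ŝ(x,y) = Σ_i Σ_{i'} x_i y_{i'} g(i) g(i') 𝟙[idx(i) = idx(i')]`, and its second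
moment equals
`E[Ŝ²] = ⟨x,y⟩² + (1/m)·(Σ_{Z_id(i)≠Z_id(j)} x_i² y_j² + Σ_{Z_id(i)≠Z_id(j)} x_i y_i x_j y_j)`. -/
theorem robe_pairwise_expansion_and_second_moment (n m Z : ℕ)
    (hn : 0 < n) (hm : 0 < m) (hZ : 0 < Z)
    (hdvd : Z ∣ n) (hZm : Z ≤ m) (hmn : m ≤ n) (x y : Fin n → ℝ) :
    (∀ ω : (Fin (n / Z) → Fin m) × (Fin n → Bool),
      est n m Z hdvd x y ω =
        ∑ i : Fin n, ∑ i' : Fin n,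
          x i * y i' * sgn (ω.2 i) * sgn (ω.2 i') *
            (if idx n m Z hdvd ω.1 i = idx n m Z hdvd ω.1 i' then 1 else 0)) ∧
    expec n m Z (fun ω => (est n m Z hdvd x y ω) ^ 2) =
      (∑ i : Fin n, x i * y i) ^ 2 +
        (1 / (m : ℝ)) *
          ((∑ i : Fin n, ∑ j : Fin n,
              if i.1 / Z ≠ j.1 / Z then x i ^ 2 * y j ^ 2 else 0) +
           (∑ i : Fin n, ∑ j : Fin n,
              if i.1 / Z ≠ j.1 / Z then x i * y i * x j * y j else 0)) := by
  refine ⟨fun ω => est_pairwise hm hdvd x y ω, ?_⟩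
  set S₀ : ℝ := ∑ i : Fin n, x i * y i with hS₀
  unfold expec
  have step1 : ∀ ω : (Fin (n / Z) → Fin m) × (Fin n → Bool),
      (est n m Z hdvd x y ω) ^ 2 =
        S₀ ^ 2 + (2 * S₀) * (∑ p : Fin n × Fin n, tterm n m Z hdvd x y ω p) +
          (∑ p : Fin n × Fin n, tterm n m Z hdvd x y ω p) ^ 2 := by
    intro ω; rw [est_decomp hm hZ hZm hdvd x y ω]; ring
  rw [Finset.sum_congr rfl fun ω _ => step1 ω]
  rw [Finset.sum_add_distrib, Finset.sum_add_distrib, Finset.sum_const,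
    ← Finset.mul_sum, sum_T_zero hdvd x y, mul_zero, add_zero,
    sum_T_sq hm hdvd x y, nsmul_eq_mul]
  have hcard : ((Fintype.card ((Fin (n / Z) → Fin m) × (Fin n → Bool))) : ℝ) =
      (m:ℝ) ^ (n / Z) * (2:ℝ) ^ n := by
    simp [Fintype.card_prod, Fintype.card_fun]
  rw [hcard]
  have hNpos : 1 ≤ n / Z := (Nat.one_le_div_iff hZ).2 (hZm.trans hmn)
  have hmpow : (m:ℝ) ^ (n / Z) = (m:ℝ) ^ (n / Z - 1) * (m:ℝ) := by
    rw [← pow_succ]; congr 1; omega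
  have hm0 : (m:ℝ) ≠ 0 := Nat.cast_ne_zero.2 hm.ne'
  have h20 : ((2:ℝ)) ^ n ≠ 0 := pow_ne_zero _ two_ne_zero
  have hmp0 : (m:ℝ) ^ (n / Z - 1) ≠ 0 := pow_ne_zero _ hm0
  rw [hmpow]
  field_simp
  rw [Finset.card_univ, hcard, hmpow]
  ring
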